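/- Let C ⊑ D be a PL subsumption that is elementary with respect to K and O, with C ≠ ⊥, and let (I,d) be the canonical model of C. Then the oracle structural subsumption algorithm satisfies: STS^{O_K^+}(C ⊑ D) = true if and only if d ∈ D^I. -/

import Mathlib

/-! Core formalization of the policy logic `PL` of Bonatti et al.,
    "Machine Understandable Policies and GDPR Compliance Checking". -/

namespace PLPaper

/-- Simple `PL` concepts: `C ::= A | ⊥ | ∃f.[l,u] | ∃R.C | C ⊓ C`. -/
inductive SPL : Type
  | atom  : ℕ → SPL
  | bot   : SPL
  | ival  : ℕ → ℤ → ℤ → SPL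
  | ex    : ℕ → SPL → SPL
  | inter : SPL → SPL → SPL
  deriving DecidableEq

/-- A full `PL` concept: a union `C₁ ⊔ … ⊔ Cₙ` of simple concepts, given as a list. -/
abbrev PLC := List SPL

/-- Axioms of a `PL` knowledge base. -/
inductive PLAx : Type
  | funcRole : ℕ → PLAx              -- func(R), R a role name
  | funcProp : ℕ → PLAx              -- func(f), f a concrete property
  | rangeAx  : ℕ → ℕ → PLAx          -- range(R, A)
  | incl     : ℕ → ℕ → PLAx          -- A ⊑ B
  | disj     : ℕ → ℕ → PLAx          -- disj(A, B)
  deriving DecidableEq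

/-- A description-logic interpretation (concept names, role names, concrete properties). -/
structure Interp : Type 1 where
  Δ : Type
  nonempty : Nonempty Δ
  conc : ℕ → Set Δ
  role : ℕ → Set (Δ × Δ)
  cprop : ℕ → Set (Δ × ℤ)

/-- Semantics of simple `PL` concepts. -/
def SPL.sem (I : Interp) : SPL → Set I.Δ
  | .atom a => I.conc a
  | .bot => ∅
  | .ival f l u => {d | ∃ i : ℤ, l ≤ i ∧ i ≤ u ∧ (d, i) ∈ I.cprop f}
  | .ex r c => {d | ∃ e, (d, e) ∈ I.role r ∧ e ∈ c.sem I}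
  | .inter c d => c.sem I ∩ d.sem I

/-- Semantics of full `PL` concepts (finite unions). -/
def semL (I : Interp) (C : PLC) : Set I.Δ := {d | ∃ c ∈ C, d ∈ c.sem I}

/-- Satisfaction of a `PL` axiom. -/
def Interp.satAx (I : Interp) : PLAx → Prop
  | .funcRole r => ∀ ⦃d e e'⦄, (d, e) ∈ I.role r → (d, e') ∈ I.role r → e = e'
  | .funcProp f => ∀ ⦃d i j⦄, (d, i) ∈ I.cprop f → (d, j) ∈ I.cprop f → i = j
  | .rangeAx r a => ∀ ⦃d e⦄, (d, e) ∈ I.role r → e ∈ I.conc a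
  | .incl a b => I.conc a ⊆ I.conc b
  | .disj a b => I.conc a ∩ I.conc b = ∅

def Interp.satKB (I : Interp) (K : Set PLAx) : Prop := ∀ ax ∈ K, I.satAx ax

/-- `K ⊨ C ⊑ D` for full `PL` concepts. -/
def Entails (K : Set PLAx) (C D : PLC) : Prop :=
  ∀ I : Interp, I.satKB K → semL I C ⊆ semL I D

/-- The multiset of conjuncts of a simple concept (intersections treated as sets:
    ordering and parenthesization of conjuncts is irrelevant). -/
def SPL.conj : SPL → Multiset SPL
  | .inter c d => c.conj + d.conj
  | c => {c}

/-- `⊑*`: the reflexive–transitive closure of the atomic inclusions of `K`. -/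
def SubStar (K : Set PLAx) : ℕ → ℕ → Prop :=
  Relation.ReflTransGen fun a b => PLAx.incl a b ∈ K

/-- One application of one of the seven normalization rules w.r.t. `K` (Table 3);
    intersections are treated as sets of conjuncts, and rules may be applied to
    subconcepts (congruence). -/
inductive Rw (K : Set PLAx) : SPL → SPL → Prop
  /-- rule 1: `⊥ ⊓ D ⇝ ⊥` -/
  | botConj (C : SPL) :
      SPL.bot ∈ C.conj → C ≠ SPL.bot → Rw K C SPL.bot
  /-- rule 2: `∃R.⊥ ⇝ ⊥` -/
  | exBot (r : ℕ) : Rw K (SPL.ex r SPL.bot) SPL.bot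
  /-- rule 3: `∃f.[l,u] ⇝ ⊥` if `l > u` -/
  | emptyIval (f : ℕ) (l u : ℤ) : u < l → Rw K (SPL.ival f l u) SPL.bot
  /-- rule 4: merge existential restrictions over a functional role -/
  | funcRole (C C' : SPL) (r : ℕ) (D D' : SPL) (rest : Multiset SPL) :
      PLAx.funcRole r ∈ K →
      C.conj = {SPL.ex r D, SPL.ex r D'} + rest →
      C'.conj = {SPL.ex r (SPL.inter D D')} + rest →
      Rw K C C'
  /-- rule 5: merge interval constraints over a functional concrete property -/
  | funcProp (C C' : SPL) (f : ℕ) (l₁ u₁ l₂ u₂ : ℤ) (rest : Multiset SPL) :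
      PLAx.funcProp f ∈ K →
      C.conj = {SPL.ival f l₁ u₁, SPL.ival f l₂ u₂} + rest →
      C'.conj = {SPL.ival f (max l₁ l₂) (min u₁ u₂)} + rest →
      Rw K C C'
  /-- rule 6: add range information -/
  | rangeRule (C C' : SPL) (r a : ℕ) (D : SPL) (rest : Multiset SPL) :
      PLAx.rangeAx r a ∈ K →
      SPL.atom a ∉ D.conj → SPL.bot ∉ D.conj →
      C.conj = {SPL.ex r D} + rest →
      C'.conj = {SPL.ex r (SPL.inter D (SPL.atom a))} + rest →
      Rw K C C'
  /-- rule 7: disjointness clash -/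
  | disjRule (C : SPL) (a₁ a₂ b₁ b₂ : ℕ) :
      SPL.atom a₁ ∈ C.conj → SPL.atom a₂ ∈ C.conj →
      SubStar K a₁ b₁ → SubStar K a₂ b₂ →
      PLAx.disj b₁ b₂ ∈ K →
      Rw K C SPL.bot
  /-- rules may be applied inside existential restrictions -/
  | exCongr (r : ℕ) (c c' : SPL) : Rw K c c' → Rw K (SPL.ex r c) (SPL.ex r c')
  /-- rules may be applied to one conjunct of an intersection -/
  | interCongr (C C' c c' : SPL) (rest : Multiset SPL) :
      Rw K c c' →
      C.conj = {c} + rest → C'.conj = {c'} + rest →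
      Rw K C C'

/-- A simple concept is normalized w.r.t. `K` when no rule is applicable. -/
def Normalized (K : Set PLAx) (C : SPL) : Prop := ¬ ∃ C', Rw K C C'

/-- All interval constraints `∃f.[l,u]` occurring (at any depth) in a simple concept. -/
def SPL.ivalsOf : SPL → List (ℕ × ℤ × ℤ)
  | .ival f l u => [(f, l, u)]
  | .ex _ c => c.ivalsOf
  | .inter c d => c.ivalsOf ++ d.ivalsOf
  | _ => []

def ivalsL (C : PLC) : List (ℕ × ℤ × ℤ) := C.flatMap SPL.ivalsOf

/-- The integers occurring as interval endpoints in a full concept. -/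
def endpointsL (D : PLC) : List ℤ := (ivalsL D).flatMap fun t => [t.2.1, t.2.2]

/-- A subsumption `C ⊑ D` is interval safe iff every interval of `C` is either
    contained in, or disjoint from, every interval of `D`. -/
def IntervalSafe (C D : PLC) : Prop :=
  ∀ p ∈ ivalsL C, ∀ q ∈ ivalsL D,
    Set.Icc p.2.1 p.2.2 ⊆ Set.Icc q.2.1 q.2.2 ∨
      Set.Icc p.2.1 p.2.2 ∩ Set.Icc q.2.1 q.2.2 = ∅

/-- Given the ascending chain `x₀ < x₁ < … < x_{r+1}` of cut points, produce the
    subinterval constraints `[xᵢ,xᵢ]`, `[xᵢ+1, xᵢ₊₁-1]`, …, `[x_{r+1},x_{r+1}]`. -/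
def chainPieces (f : ℕ) : List ℤ → List SPL
  | [] => []
  | [x] => [SPL.ival f x x]
  | x :: y :: rest =>
      SPL.ival f x x :: SPL.ival f (x + 1) (y - 1) :: chainPieces f (y :: rest)

/-- The endpoints of `D` lying in `[l,u]`, sorted in increasing order, without duplicates. -/
def cutPoints (E : List ℤ) (l u : ℤ) : List ℤ :=
  ((E.filter fun x => decide (l ≤ x ∧ x ≤ u)).toFinset).sort (· ≤ ·)

/-- Interval splitting of a single constraint `∃f.[l,u]` w.r.t. the endpoints `E`. -/
def splitIval (E : List ℤ) (f : ℕ) (l u : ℤ) : List SPL :=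
  chainPieces f (l :: (cutPoints E l u ++ [u]))

/-- Interval normalization of a simple concept w.r.t. endpoints `E`: replace each
    interval constraint by the union of its pieces and lift unions to the top level
    (distributivity of `⊓` over `⊔` and `∃R.(C₁ ⊔ C₂) ≡ ∃R.C₁ ⊔ ∃R.C₂`). -/
def SPL.splitC (E : List ℤ) : SPL → List SPL
  | .atom a => [.atom a]
  | .bot => [.bot]
  | .ival f l u => splitIval E f l u
  | .ex r c => (c.splitC E).map (SPL.ex r)
  | .inter c d => (c.splitC E).flatMap fun c' => (d.splitC E).map fun d' => SPL.inter c' d'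

/-- `split(C, D)` for full `PL` concepts. -/
def splitL (C D : PLC) : PLC := C.flatMap (SPL.splitC (endpointsL D))

/-- Size of (the encoding of) a simple concept. -/
def SPL.size : SPL → ℕ
  | .atom _ => 1
  | .bot => 1
  | .ival _ _ _ => 1
  | .ex _ c => c.size + 1
  | .inter c d => c.size + d.size + 1

/-- Size of a full concept. -/
def sizeL (C : PLC) : ℕ := (C.map SPL.size).sum + 1

/-- The structural subsumption algorithm `STS` (Algorithm 1): `STS K C D` holds
    iff the algorithm returns `true` on the elementary subsumption `C ⊑ D`. -/
inductive STS (K : Set PLAx) : SPL → SPL → Prop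
  | botCase (D : SPL) : STS K SPL.bot D
  | atomCase (C : SPL) (a a' : ℕ) :
      SPL.atom a' ∈ C.conj → SubStar K a' a → STS K C (SPL.atom a)
  | ivalCase (C : SPL) (f : ℕ) (l u l' u' : ℤ) :
      SPL.ival f l' u' ∈ C.conj → l ≤ l' → u' ≤ u → STS K C (SPL.ival f l u)
  | exCase (C C' D' : SPL) (r : ℕ) :
      SPL.ex r C' ∈ C.conj → STS K C' D' → STS K C (SPL.ex r D')
  | interCase (C D' D'' : SPL) :
      STS K C D' → STS K C D'' → STS K C (SPL.inter D' D'')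

/-- Pointwise exhaustive normalization of the disjuncts of a full concept. -/
def RwL (K : Set PLAx) (C C' : PLC) : Prop :=
  List.Forall₂ (Relation.ReflTransGen (Rw K)) C C'

/-- `PLR(K, C ⊑ D) = true` (Algorithm 2): normalize `C` exhaustively with the seven
    rules, split intervals w.r.t. `D`, and check every resulting disjunct against
    some disjunct of `D` with `STS`. -/
def PLRaccept (K : Set PLAx) (C D : PLC) : Prop :=
  ∃ C' : PLC, RwL K C C' ∧ (∀ c ∈ C', Normalized K c) ∧
    ∀ c ∈ splitL C' D, ∃ d ∈ D, STS K c d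

/-! ### Signatures -/

def SPL.rNames : SPL → Set ℕ
  | .ex r c => insert r c.rNames
  | .inter c d => c.rNames ∪ d.rNames
  | _ => ∅

def SPL.cNames : SPL → Set ℕ
  | .atom a => {a}
  | .ex _ c => c.cNames
  | .inter c d => c.cNames ∪ d.cNames
  | _ => ∅

def rNamesL (C : PLC) : Set ℕ := {n | ∃ c ∈ C, n ∈ SPL.rNames c}
def cNamesL (C : PLC) : Set ℕ := {n | ∃ c ∈ C, n ∈ SPL.cNames c}

def PLAx.rNames : PLAx → Set ℕ
  | .funcRole r => {r}
  | .rangeAx r _ => {r}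
  | _ => ∅

def PLAx.cNames : PLAx → Set ℕ
  | .rangeAx _ a => {a}
  | .incl a b => {a, b}
  | .disj a b => {a, b}
  | _ => ∅

def rNamesPL (K : Set PLAx) : Set ℕ := {n | ∃ ax ∈ K, n ∈ PLAx.rNames ax}
def cNamesPL (K : Set PLAx) : Set ℕ := {n | ∃ ax ∈ K, n ∈ PLAx.cNames ax}

/-! ### Horn-SRIQ oracles -/

/-- SRIQ roles: role names and their inverses. -/
inductive HRole : Type
  | name : ℕ → HRole
  | inv  : ℕ → HRole
  deriving DecidableEq

/-- The concepts allowed in normal-form Horn-SRIQ axioms: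
    concept names, `⊤`, `⊥`, and `∃S.Self`. -/
inductive HAtom : Type
  | name : ℕ → HAtom
  | top  : HAtom
  | bot  : HAtom
  | self : HRole → HAtom
  deriving DecidableEq

/-- Horn-SRIQ axioms in normal form (Table 2), plus role axioms. -/
inductive HAx : Type
  | sub2    : HAtom → HAtom → HAtom → HAx      -- C₁ ⊓ C₂ ⊑ D
  | subEx   : HRole → HAtom → HAtom → HAx      -- ∃R.C ⊑ D
  | subAll  : HAtom → HRole → HAtom → HAx      -- C ⊑ ∀R.D
  | subToEx : HAtom → HRole → HAtom → HAx      -- C ⊑ ∃R.D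
  | atMost1 : HAtom → HRole → HAtom → HAx      -- C ⊑ ≤1 S.D
  | atLeast : HAtom → ℕ → HRole → HAtom → HAx  -- C ⊑ ≥n S.D
  | rIncl   : List HRole → HRole → HAx         -- R₁ ∘ … ∘ Rₙ ⊑ R
  | rDisj   : HRole → HRole → HAx              -- disj(S₁, S₂)

def HRole.sem (I : Interp) : HRole → Set (I.Δ × I.Δ)
  | .name r => I.role r
  | .inv r => {p | (p.2, p.1) ∈ I.role r}

def HAtom.sem (I : Interp) : HAtom → Set I.Δ
  | .name a => I.conc a
  | .top => Set.univ
  | .bot => ∅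
  | .self s => {d | (d, d) ∈ s.sem I}

def HRole.semChain (I : Interp) : List HRole → Set (I.Δ × I.Δ)
  | [] => {p | p.1 = p.2}
  | r :: rest => {p | ∃ z, (p.1, z) ∈ r.sem I ∧ (z, p.2) ∈ HRole.semChain I rest}

def Interp.satHAx (I : Interp) : HAx → Prop
  | .sub2 c₁ c₂ d => c₁.sem I ∩ c₂.sem I ⊆ d.sem I
  | .subEx r c d => {x | ∃ y, (x, y) ∈ r.sem I ∧ y ∈ c.sem I} ⊆ d.sem I
  | .subAll c r d => ∀ ⦃x y⦄, x ∈ c.sem I → (x, y) ∈ r.sem I → y ∈ d.sem I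
  | .subToEx c r d => ∀ ⦃x⦄, x ∈ c.sem I → ∃ y, (x, y) ∈ r.sem I ∧ y ∈ d.sem I
  | .atMost1 c s d => ∀ ⦃x y z⦄, x ∈ c.sem I → (x, y) ∈ s.sem I → y ∈ d.sem I →
      (x, z) ∈ s.sem I → z ∈ d.sem I → y = z
  | .atLeast c n s d => ∀ ⦃x⦄, x ∈ c.sem I →
      ∃ t : Finset I.Δ, n ≤ t.card ∧ ∀ y ∈ t, (x, y) ∈ s.sem I ∧ y ∈ d.sem I
  | .rIncl rs r => HRole.semChain I rs ⊆ r.sem I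
  | .rDisj s₁ s₂ => s₁.sem I ∩ s₂.sem I = ∅

def Interp.satHKB (I : Interp) (O : Set HAx) : Prop := ∀ ax ∈ O, I.satHAx ax

def HRole.base : HRole → ℕ
  | .name r => r
  | .inv r => r

def HAtom.cNames : HAtom → Set ℕ
  | .name a => {a}
  | _ => ∅

def HAtom.rNames : HAtom → Set ℕ
  | .self s => {s.base}
  | _ => ∅

def HAx.cNames : HAx → Set ℕ
  | .sub2 c₁ c₂ d => c₁.cNames ∪ c₂.cNames ∪ d.cNames
  | .subEx _ c d => c.cNames ∪ d.cNames
  | .subAll c _ d => c.cNames ∪ d.cNames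
  | .subToEx c _ d => c.cNames ∪ d.cNames
  | .atMost1 c _ d => c.cNames ∪ d.cNames
  | .atLeast c _ _ d => c.cNames ∪ d.cNames
  | .rIncl _ _ => ∅
  | .rDisj _ _ => ∅

def HAx.rNames : HAx → Set ℕ
  | .sub2 c₁ c₂ d => c₁.rNames ∪ c₂.rNames ∪ d.rNames
  | .subEx r c d => insert r.base (c.rNames ∪ d.rNames)
  | .subAll c r d => insert r.base (c.rNames ∪ d.rNames)
  | .subToEx c r d => insert r.base (c.rNames ∪ d.rNames)
  | .atMost1 c s d => insert s.base (c.rNames ∪ d.rNames)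
  | .atLeast c _ s d => insert s.base (c.rNames ∪ d.rNames)
  | .rIncl rs r => insert r.base {n | ∃ s ∈ rs, n = HRole.base s}
  | .rDisj s₁ s₂ => {s₁.base, s₂.base}

def rNamesH (O : Set HAx) : Set ℕ := {n | ∃ ax ∈ O, n ∈ HAx.rNames ax}
def cNamesH (O : Set HAx) : Set ℕ := {n | ∃ ax ∈ O, n ∈ HAx.cNames ax}

/-! ### Axiom shifting, oracle queries, `pos(O_K⁺)` -/

/-- Range and functionality axioms. -/
def isRF : PLAx → Prop
  | .funcRole _ => True
  | .funcProp _ => True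
  | .rangeAx _ _ => True
  | _ => False

/-- `K_O⁻`: the range and functionality axioms of `K`. -/
def Kminus (K : Set PLAx) : Set PLAx := {ax | ax ∈ K ∧ isRF ax}

/-- `K \ K_O⁻`: the inclusion and disjointness axioms of `K`, shifted to the oracle. -/
def Kshift (K : Set PLAx) : Set PLAx := {ax | ax ∈ K ∧ ¬ isRF ax}

/-- Satisfaction of `O_K⁺ = O ∪ (K \ K_O⁻)`. -/
def satOplus (I : Interp) (K : Set PLAx) (O : Set HAx) : Prop :=
  I.satHKB O ∧ I.satKB (Kshift K)

/-- An oracle query `A₁ ⊓ … ⊓ A_m ⊑ A_{m+1} ⊔ … ⊔ Aₙ` (right-hand side `⊥` when empty). -/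
structure OQuery : Type where
  lhs : List ℕ
  rhs : List ℕ

def Interp.satQ (I : Interp) (q : OQuery) : Prop :=
  {d | ∀ a ∈ q.lhs, d ∈ I.conc a} ⊆ {d | ∃ b ∈ q.rhs, d ∈ I.conc b}

/-- The concept names of `sig(O_K⁺)`. -/
def cNamesOplus (K : Set PLAx) (O : Set HAx) : Set ℕ :=
  cNamesH O ∪ cNamesPL (Kshift K)

/-- `pos(O_K⁺)`: the oracle queries over `sig(O_K⁺) ∩ N_C` entailed by `O_K⁺`. -/
def posOplus (K : Set PLAx) (O : Set HAx) : Set OQuery :=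
  {q | (∀ a ∈ q.lhs, a ∈ cNamesOplus K O) ∧ (∀ b ∈ q.rhs, b ∈ cNamesOplus K O) ∧
     ∀ I : Interp, satOplus I K O → I.satQ q}

/-- `K ∪ O ⊨ C ⊑ D`. -/
def EntailsKO (K : Set PLAx) (O : Set HAx) (C D : PLC) : Prop :=
  ∀ I : Interp, I.satKB K → I.satHKB O → semL I C ⊆ semL I D

/-- `K_O⁻ ∪ pos(O_K⁺) ⊨ C ⊑ D`. -/
def EntailsShift (K : Set PLAx) (O : Set HAx) (C D : PLC) : Prop :=
  ∀ I : Interp, I.satKB (Kminus K) → (∀ q ∈ posOplus K O, I.satQ q) →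
    semL I C ⊆ semL I D

/-- `O_K⁺ ⊨ A₁ ⊓ … ⊓ Aₙ ⊑ ⊥`. -/
def OplusRefutes (K : Set PLAx) (O : Set HAx) (as : List ℕ) : Prop :=
  ∀ I : Interp, satOplus I K O → ∀ d : I.Δ, ¬ ∀ a ∈ as, d ∈ I.conc a

/-- One application of one of the seven oracle normalization rules (Table 4). -/
inductive RwO (K : Set PLAx) (O : Set HAx) : SPL → SPL → Prop
  /-- rule 1: `⊥ ⊓ D ⇝ ⊥` -/
  | botConj (C : SPL) :
      SPL.bot ∈ C.conj → C ≠ SPL.bot → RwO K O C SPL.bot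
  /-- rule 2 -/
  | exBot (r : ℕ) : RwO K O (SPL.ex r SPL.bot) SPL.bot
  /-- rule 3 -/
  | emptyIval (f : ℕ) (l u : ℤ) : u < l → RwO K O (SPL.ival f l u) SPL.bot
  /-- rule 4 -/
  | funcRole (C C' : SPL) (r : ℕ) (D D' : SPL) (rest : Multiset SPL) :
      PLAx.funcRole r ∈ Kminus K →
      C.conj = {SPL.ex r D, SPL.ex r D'} + rest →
      C'.conj = {SPL.ex r (SPL.inter D D')} + rest →
      RwO K O C C'
  /-- rule 5 (unconditional) -/
  | funcProp (C C' : SPL) (f : ℕ) (l₁ u₁ l₂ u₂ : ℤ) (rest : Multiset SPL) :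
      C.conj = {SPL.ival f l₁ u₁, SPL.ival f l₂ u₂} + rest →
      C'.conj = {SPL.ival f (max l₁ l₂) (min u₁ u₂)} + rest →
      RwO K O C C'
  /-- rule 6 -/
  | rangeRule (C C' : SPL) (r a : ℕ) (D : SPL) (rest : Multiset SPL) :
      PLAx.rangeAx r a ∈ Kminus K →
      SPL.atom a ∉ D.conj → SPL.bot ∉ D.conj →
      C.conj = {SPL.ex r D} + rest →
      C'.conj = {SPL.ex r (SPL.inter D (SPL.atom a))} + rest →
      RwO K O C C'
  /-- rule 7: `A₁ ⊓ … ⊓ Aₙ ⊓ D ⇝ ⊥` if `O_K⁺ ⊨ A₁ ⊓ … ⊓ Aₙ ⊑ ⊥` -/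
  | atomsBot (C : SPL) (as : List ℕ) :
      as ≠ [] → (∀ a ∈ as, SPL.atom a ∈ C.conj) → OplusRefutes K O as →
      RwO K O C SPL.bot
  /-- congruence: inside existential restrictions -/
  | exCongr (r : ℕ) (c c' : SPL) : RwO K O c c' → RwO K O (SPL.ex r c) (SPL.ex r c')
  /-- congruence: on one conjunct -/
  | interCongr (C C' c c' : SPL) (rest : Multiset SPL) :
      RwO K O c c' →
      C.conj = {c} + rest → C'.conj = {c'} + rest →
      RwO K O C C'

/-- `C` is normalized w.r.t. `K` and `O`. -/
def NormalizedO (K : Set PLAx) (O : Set HAx) (C : SPL) : Prop := ¬ ∃ C', RwO K O C C'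

/-! ### The canonical model of a normalized simple concept -/

/-- The top-level existential restrictions of a simple concept, in syntactic order. -/
def SPL.exList : SPL → List (ℕ × SPL)
  | .ex r c => [(r, c)]
  | .inter c d => c.exList ++ d.exList
  | _ => []

/-- The top-level concept names of a simple concept. -/
def SPL.atomList : SPL → List ℕ
  | .atom a => [a]
  | .inter c d => c.atomList ++ d.atomList
  | _ => []

/-- The top-level interval constraints of a simple concept. -/
def SPL.ivalList : SPL → List (ℕ × ℤ × ℤ)
  | .ival f l u => [(f, l, u)]
  | .inter c d => c.ivalList ++ d.ivalList
  | _ => []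

/-- The subconcept of `C` reached by following a path of indices into the
    nested top-level existential restrictions. -/
def subAt : List ℕ → SPL → Option SPL
  | [], C => some C
  | i :: p, C =>
    match C.exList[i]? with
    | some rc => subAt p rc.2
    | none => none

/-- The canonical model of a simple concept `C` w.r.t. `K` and `O` (Definition 18):
    its domain is the tree of nested existential restrictions of `C`. -/
def canonInterp (K : Set PLAx) (O : Set HAx) (C : SPL) : Interp where
  Δ := {p : List ℕ // (subAt p C).isSome}
  nonempty := ⟨⟨[], by simp [subAt]⟩⟩
  conc := fun a => {p | ∃ C', subAt p.1 C = some C' ∧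
    (OQuery.mk C'.atomList [a]) ∈ posOplus K O}
  role := fun r => {pq | ∃ (C' : SPL) (i : ℕ) (rc : ℕ × SPL),
    subAt pq.1.1 C = some C' ∧ C'.exList[i]? = some rc ∧ rc.1 = r ∧
    pq.2.1 = pq.1.1 ++ [i]}
  cprop := fun f => {pi | ∃ (C' : SPL) (l : ℤ),
    subAt pi.1.1 C = some C' ∧ (f, l, pi.2) ∈ C'.ivalList}

/-- The distinguished point `d` of the canonical model. -/
def canonRoot (K : Set PLAx) (O : Set HAx) (C : SPL) : (canonInterp K O C).Δ :=
  ⟨[], by simp [subAt]⟩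

/-! ### The oracle structural subsumption algorithm and `PLR^O` -/

/-- `STS^O` (Algorithm 3), with the oracle `O_K⁺`. -/
inductive STSO (K : Set PLAx) (O : Set HAx) : SPL → SPL → Prop
  | botCase (D : SPL) : STSO K O SPL.bot D
  | atomCase (C : SPL) (a : ℕ) :
      (OQuery.mk C.atomList [a]) ∈ posOplus K O → STSO K O C (SPL.atom a)
  | ivalCase (C : SPL) (f : ℕ) (l u l' u' : ℤ) :
      SPL.ival f l' u' ∈ C.conj → l ≤ l' → u' ≤ u → STSO K O C (SPL.ival f l u)
  | exCase (C C' D' : SPL) (r : ℕ) :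
      SPL.ex r C' ∈ C.conj → STSO K O C' D' → STSO K O C (SPL.ex r D')
  | interCase (C D' D'' : SPL) :
      STSO K O C D' → STSO K O C D'' → STSO K O C (SPL.inter D' D'')

def RwOL (K : Set PLAx) (O : Set HAx) (C C' : PLC) : Prop :=
  List.Forall₂ (Relation.ReflTransGen (RwO K O)) C C'

/-- `PLR^O(K, C ⊑ D) = true` (Algorithm 4). -/
def PLROaccept (K : Set PLAx) (O : Set HAx) (C D : PLC) : Prop :=
  ∃ C' : PLC, RwOL K O C C' ∧ (∀ c ∈ C', NormalizedO K O c) ∧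
    ∀ c ∈ splitL C' D, ∃ d ∈ D, STSO K O c d

/-! ### Single-atom form and oracle compilation -/

/-- Auxiliary predicate: every conjunct is a concept name, an interval constraint,
    or an existential restriction whose filler is in single-atom form. -/
def SAaux : SPL → Prop
  | .atom _ => True
  | .bot => False
  | .ival _ _ _ => True
  | .ex _ c => SAaux c ∧ c.atomList.length ≤ 1
  | .inter c d => SAaux c ∧ SAaux d

/-- A simple concept in single-atom form. -/
def SingleAtomS (C : SPL) : Prop := SAaux C ∧ C.atomList.length ≤ 1

/-- A full concept in single-atom form. -/
def SingleAtomL (C : PLC) : Prop := ∀ c ∈ C, SingleAtomS c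

/-- `comp(K, O) = K_O⁻ ∪ { A ⊑ B : (A ⊑ B) ∈ pos(O_K⁺) }`. -/
def compKB (K : Set PLAx) (O : Set HAx) : Set PLAx :=
  Kminus K ∪ {ax | ∃ a b : ℕ, ax = PLAx.incl a b ∧ (OQuery.mk [a] [b]) ∈ posOplus K O}

/-- A definition `B ≡ A₁ ⊓ … ⊓ Aₙ` (expressible in both EL and DL-lite_horn). -/
abbrev CDef := ℕ × List ℕ

def Interp.satDef (I : Interp) (df : CDef) : Prop :=
  I.conc df.1 = {d | ∀ a ∈ df.2, d ∈ I.conc a}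

/-- `K ∪ O ∪ O* ⊨ C ⊑ D`, where `O*` is a list of definitions. -/
def EntailsKODefs (K : Set PLAx) (O : Set HAx) (defs : List CDef) (C D : PLC) : Prop :=
  ∀ I : Interp, I.satKB K → I.satHKB O → (∀ df ∈ defs, I.satDef df) →
    semL I C ⊆ semL I D

def defsSize (defs : List CDef) : ℕ := (defs.map fun p => p.2.length + 1).sum

end PLPaper

namespace PLPaper

/-! ### Auxiliary lemmas on conjunct multisets -/

lemma conj_eq_singleton_of_mem {C x : SPL} (h : x ∈ C.conj) : x.conj = {x} := by
  induction C with
  | inter c d ihc ihd =>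
      rw [SPL.conj] at h
      rcases Multiset.mem_add.1 h with h | h
      · exact ihc h
      · exact ihd h
  | atom a => simp [SPL.conj] at h; subst h; rfl
  | bot => simp [SPL.conj] at h; subst h; rfl
  | ival f l u => simp [SPL.conj] at h; subst h; rfl
  | ex r c _ => simp [SPL.conj] at h; subst h; rfl

/-- Build a concept with a prescribed conjunct multiset. -/
def buildC (c : SPL) : List SPL → SPL
  | [] => c
  | x :: l => SPL.inter x (buildC c l)

lemma buildC_conj (c : SPL) (l : List SPL) (hl : ∀ x ∈ l, SPL.conj x = {x}) :
    (buildC c l).conj = (l : Multiset SPL) + c.conj := by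
  induction l with
  | nil => simp [buildC]
  | cons x l ih =>
      have hx := hl x (by simp)
      rw [buildC, SPL.conj, hx, ih (fun y hy => hl y (by simp [hy]))]
      rw [Multiset.singleton_add, ← Multiset.cons_coe, Multiset.cons_add]

lemma exists_conj (c' : SPL) (rest : Multiset SPL) (hc : c'.conj = {c'})
    (hrest : ∀ x ∈ rest, SPL.conj x = {x}) :
    ∃ C' : SPL, C'.conj = {c'} + rest := by
  refine ⟨buildC c' rest.toList, ?_⟩
  rw [buildC_conj c' rest.toList (fun x hx => hrest x (by simpa using hx)), hc]
  simp [add_comm]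

lemma rwo_lift {K : Set PLAx} {O : Set HAx} {C c c' : SPL}
    (hc : c ∈ C.conj) (hcc' : c'.conj = {c'}) (h : RwO K O c c') :
    ∃ C', RwO K O C C' := by
  obtain ⟨C', hC'⟩ := exists_conj c' (C.conj.erase c) hcc'
    (fun x hx => conj_eq_singleton_of_mem (Multiset.mem_of_mem_erase hx))
  exact ⟨C', RwO.interCongr C C' c c' (C.conj.erase c) h
    (by rw [Multiset.singleton_add, Multiset.cons_erase hc]) hC'⟩

/-! ### conj versus atomList/ivalList/exList -/

lemma mem_conj_atom {C : SPL} {a : ℕ} : SPL.atom a ∈ C.conj ↔ a ∈ C.atomList := by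
  induction C with
  | inter c d ihc ihd =>
      rw [SPL.conj]
      simp [SPL.atomList, Multiset.mem_add, ihc, ihd]
  | atom b => simp [SPL.conj, SPL.atomList]
  | bot => simp [SPL.conj, SPL.atomList]
  | ival f l u => simp [SPL.conj, SPL.atomList]
  | ex r c _ => simp [SPL.conj, SPL.atomList]

lemma mem_conj_ival {C : SPL} {f : ℕ} {l u : ℤ} :
    SPL.ival f l u ∈ C.conj ↔ (f, l, u) ∈ C.ivalList := by
  induction C with
  | inter c d ihc ihd =>
      rw [SPL.conj]
      simp [SPL.ivalList, Multiset.mem_add, ihc, ihd]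
  | atom b => simp [SPL.conj, SPL.ivalList]
  | bot => simp [SPL.conj, SPL.ivalList]
  | ival g l' u' => simp [SPL.conj, SPL.ivalList]
  | ex r c _ => simp [SPL.conj, SPL.ivalList]

lemma mem_conj_ex {C : SPL} {r : ℕ} {c : SPL} :
    SPL.ex r c ∈ C.conj ↔ (r, c) ∈ C.exList := by
  induction C with
  | inter c' d ihc ihd =>
      rw [SPL.conj]
      simp [SPL.exList, Multiset.mem_add, ihc, ihd]
  | atom b => simp [SPL.conj, SPL.exList]
  | bot => simp [SPL.conj, SPL.exList]
  | ival g l' u' => simp [SPL.conj, SPL.exList]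
  | ex r' c' _ => simp [SPL.conj, SPL.exList]

/-! ### Consequences of normalization -/

lemma norm_ival {K : Set PLAx} {O : Set HAx} {C : SPL} (hn : NormalizedO K O C)
    {f : ℕ} {l u : ℤ} (h : (f, l, u) ∈ C.ivalList) : l ≤ u := by
  by_contra hlt
  push_neg at hlt
  exact hn (rwo_lift (mem_conj_ival.2 h) rfl (RwO.emptyIval f l u hlt))

lemma norm_ex {K : Set PLAx} {O : Set HAx} {C : SPL} (hn : NormalizedO K O C)
    {r : ℕ} {c : SPL} (h : (r, c) ∈ C.exList) :
    c ≠ SPL.bot ∧ NormalizedO K O c := by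
  constructor
  · rintro rfl
    exact hn (rwo_lift (mem_conj_ex.2 h) rfl (RwO.exBot r))
  · rintro ⟨c', hc'⟩
    exact hn (rwo_lift (mem_conj_ex.2 h) rfl (RwO.exCongr r c c' hc'))

/-! ### Interval bookkeeping -/

lemma ivalsOf_of_mem_conj {C x : SPL} (h : x ∈ C.conj) :
    ∀ t ∈ x.ivalsOf, t ∈ C.ivalsOf := by
  induction C with
  | inter c d ihc ihd =>
      rw [SPL.conj] at h
      intro t ht
      rcases Multiset.mem_add.1 h with h | h
      · exact (by simp [SPL.ivalsOf, ihc h t ht] : t ∈ (SPL.inter c d).ivalsOf)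
      · exact (by simp [SPL.ivalsOf, ihd h t ht] : t ∈ (SPL.inter c d).ivalsOf)
  | atom a => simp [SPL.conj] at h; subst h; simp
  | bot => simp [SPL.conj] at h; subst h; simp
  | ival f l u => simp [SPL.conj] at h; subst h; simp
  | ex r c _ => simp [SPL.conj] at h; subst h; simp

lemma ivalList_subset_ivalsOf {C : SPL} : ∀ t ∈ C.ivalList, t ∈ C.ivalsOf := by
  induction C with
  | inter c d ihc ihd =>
      intro t ht
      simp only [SPL.ivalList, List.mem_append] at ht
      simp only [SPL.ivalsOf, List.mem_append]
      exact ht.imp (ihc t) (ihd t)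
  | atom a => simp [SPL.ivalList]
  | bot => simp [SPL.ivalList]
  | ival f l u => simp [SPL.ivalList, SPL.ivalsOf]
  | ex r c _ => simp [SPL.ivalList]

lemma safe_mono {C D C' D' : SPL} (h : IntervalSafe [C] [D])
    (hC : ∀ t ∈ C'.ivalsOf, t ∈ C.ivalsOf) (hD : ∀ t ∈ D'.ivalsOf, t ∈ D.ivalsOf) :
    IntervalSafe [C'] [D'] := by
  have e1 : ivalsL [C] = C.ivalsOf := by simp [ivalsL]
  have e2 : ivalsL [D] = D.ivalsOf := by simp [ivalsL]
  have e3 : ivalsL [C'] = C'.ivalsOf := by simp [ivalsL]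
  have e4 : ivalsL [D'] = D'.ivalsOf := by simp [ivalsL]
  intro p hp q hq
  rw [e3] at hp; rw [e4] at hq
  exact h p (by rw [e1]; exact hC p hp) q (by rw [e2]; exact hD q hq)

/-! ### subAt and the canonical model -/

lemma subAt_append (p q : List ℕ) (C : SPL) :
    subAt (p ++ q) C = (subAt p C).bind (subAt q) := by
  induction p generalizing C with
  | nil => simp [subAt]
  | cons i p ih =>
      simp only [List.cons_append, subAt]
      cases h : C.exList[i]? with
      | none => rfl
      | some rc => exact ih rc.2

lemma sem_shift (K : Set PLAx) (O : Set HAx) {C C' : SPL} {p : List ℕ}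
    (hp : subAt p C = some C') (E : SPL) :
    ∀ (q : List ℕ) (h1 : (subAt (p ++ q) C).isSome) (h2 : (subAt q C').isSome),
      (@Membership.mem (canonInterp K O C).Δ (Set (canonInterp K O C).Δ) _
          (E.sem (canonInterp K O C)) ⟨p ++ q, h1⟩ ↔
       @Membership.mem (canonInterp K O C').Δ (Set (canonInterp K O C').Δ) _
          (E.sem (canonInterp K O C')) ⟨q, h2⟩) := by
  have key : ∀ q, subAt (p ++ q) C = subAt q C' := fun q => by
    rw [subAt_append, hp]; rfl
  induction E with
  | atom a =>
      intro q h1 h2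
      change (∃ X, subAt (p ++ q) C = some X ∧ OQuery.mk X.atomList [a] ∈ posOplus K O) ↔
        (∃ X, subAt q C' = some X ∧ OQuery.mk X.atomList [a] ∈ posOplus K O)
      rw [key q]
  | bot =>
      intro q h1 h2
      exact ⟨fun h => False.elim h, fun h => False.elim h⟩
  | ival f l u =>
      intro q h1 h2
      change (∃ i : ℤ, l ≤ i ∧ i ≤ u ∧ ∃ (X : SPL) (l' : ℤ), subAt (p ++ q) C = some X ∧
          (f, l', i) ∈ X.ivalList) ↔
        (∃ i : ℤ, l ≤ i ∧ i ≤ u ∧ ∃ (X : SPL) (l' : ℤ), subAt q C' = some X ∧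
          (f, l', i) ∈ X.ivalList)
      rw [key q]
  | ex r E ih =>
      intro q h1 h2
      constructor
      · rintro ⟨e, ⟨C'', i, rc, hsub, hget, hr, he⟩, hE⟩
        have he' : e.1 = p ++ (q ++ [i]) := by simpa [List.append_assoc] using he
        have hv : (subAt (p ++ (q ++ [i])) C).isSome := he' ▸ e.2
        have hv2 : (subAt (q ++ [i]) C').isSome := by rw [← key]; exact hv
        refine ⟨⟨q ++ [i], hv2⟩, ⟨C'', i, rc, ?_, hget, hr, rfl⟩, ?_⟩
        · rw [← key q]; exact hsub
        · rw [← ih (q ++ [i]) hv hv2]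
          have : e = ⟨p ++ (q ++ [i]), hv⟩ := Subtype.ext he'
          exact this ▸ hE
      · rintro ⟨e, ⟨C'', i, rc, hsub, hget, hr, he⟩, hE⟩
        have he' : e.1 = q ++ [i] := he
        have hv2 : (subAt (q ++ [i]) C').isSome := he' ▸ e.2
        have hv : (subAt (p ++ (q ++ [i])) C).isSome := by rw [key]; exact hv2
        refine ⟨⟨p ++ (q ++ [i]), hv⟩, ⟨C'', i, rc, ?_, hget, hr, by
          simp [List.append_assoc]⟩, ?_⟩
        · rw [key q]; exact hsub
        · rw [ih (q ++ [i]) hv hv2]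
          have : e = ⟨q ++ [i], hv2⟩ := Subtype.ext he'
          exact this ▸ hE
  | inter E F ihE ihF =>
      intro q h1 h2
      have := ihE q h1 h2
      have := ihF q h1 h2
      exact and_congr (ihE q h1 h2) (ihF q h1 h2)

lemma subAt_single {C : SPL} {i : ℕ} {rc : ℕ × SPL} (h : C.exList[i]? = some rc) :
    subAt [i] C = some rc.2 := by
  simp [subAt, h]

/-! ### Main lemma -/

lemma sts_iff_canon (K : Set PLAx) (O : Set HAx) :
    ∀ (D C : SPL), C ≠ SPL.bot → IntervalSafe [C] [D] → NormalizedO K O C →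
      (STSO K O C D ↔ canonRoot K O C ∈ SPL.sem (canonInterp K O C) D) := by
  intro D
  induction D with
  | atom a =>
      intro C hC hsafe hn
      constructor
      · intro h
        cases h with
        | botCase => exact absurd rfl hC
        | atomCase _ _ hq =>
            exact ⟨C, rfl, hq⟩
      · rintro ⟨C', hC', hq⟩
        have : C = C' := by simpa [canonRoot, subAt] using hC'
        subst this
        exact STSO.atomCase C a hq
  | bot =>
      intro C hC hsafe hn
      constructor
      · intro h
        cases h with
        | botCase => exact absurd rfl hC
      · intro h
        exact absurd h (by simp [SPL.sem])
  | ival f l u =>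
      intro C hC hsafe hn
      constructor
      · intro h
        cases h with
        | botCase => exact absurd rfl hC
        | ivalCase _ _ _ _ l' u' hmem hl hu =>
            have hmem' : (f, l', u') ∈ C.ivalList := mem_conj_ival.1 hmem
            have hlu : l' ≤ u' := norm_ival hn hmem'
            exact ⟨u', le_trans hl hlu, hu, C, l', rfl, hmem'⟩
      · rintro ⟨i, hli, hiu, C', l', hC', hmem⟩
        have hCC : C = C' := by simpa [canonRoot, subAt] using hC'
        subst hCC
        have hl'i : l' ≤ i := norm_ival hn hmem
        have hp : (f, l', i) ∈ ivalsL [C] := by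
          simp only [ivalsL, List.flatMap_cons, List.flatMap_nil, List.append_nil]
          exact ivalList_subset_ivalsOf _ hmem
        have hq : (f, l, u) ∈ ivalsL [SPL.ival f l u] := by
          simp [ivalsL, SPL.ivalsOf]
        rcases hsafe _ hp _ hq with hsub | hdisj
        · have h1 : l ≤ l' ∧ l' ≤ u := by
            have := hsub (by simp [Set.mem_Icc, hl'i] : l' ∈ Set.Icc l' i)
            simpa [Set.mem_Icc] using this
          have h2 : l ≤ i ∧ i ≤ u := by
            have := hsub (by simp [Set.mem_Icc, hl'i] : i ∈ Set.Icc l' i)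
            simpa [Set.mem_Icc] using this
          exact STSO.ivalCase C f l u l' i (mem_conj_ival.2 hmem) h1.1 h2.2
        · exfalso
          have : i ∈ Set.Icc l' i ∩ Set.Icc l u := by
            simp [Set.mem_Icc, hl'i, hli, hiu]
          rw [hdisj] at this
          exact this
  | ex r D' ih =>
      intro C hC hsafe hn
      constructor
      · intro h
        cases h with
        | botCase => exact absurd rfl hC
        | exCase _ C' _ _ hmem hsts =>
            have hmem' : (r, C') ∈ C.exList := mem_conj_ex.1 hmem
            obtain ⟨i, hi⟩ := List.mem_iff_getElem?.1 hmem'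
            have hsub : subAt [i] C = some C' := subAt_single hi
            have hv : (subAt ([i] : List ℕ) C).isSome := by rw [hsub]; rfl
            obtain ⟨hne, hnC'⟩ := norm_ex hn hmem'
            have hsafe' : IntervalSafe [C'] [D'] :=
              safe_mono hsafe
                (fun t ht => ivalsOf_of_mem_conj (x := SPL.ex r C') hmem t
                  (by simpa [SPL.ivalsOf] using ht))
                (by intro t ht; simpa [SPL.ivalsOf] using ht)
            have hroot : canonRoot K O C' ∈ SPL.sem (canonInterp K O C') D' :=
              (ih C' hne hsafe' hnC').1 hsts
            refine ⟨⟨[i], hv⟩, ⟨C, i, (r, C'), rfl, hi, rfl, rfl⟩, ?_⟩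
            have := (sem_shift K O hsub D' [] hv (by rfl)).2 hroot
            simpa using this
      · rintro ⟨e, ⟨C'', i, rc, hsub0, hget, hr, he⟩, hE⟩
        have hCC : C = C'' := by simpa [canonRoot, subAt] using hsub0
        subst hCC
        have he' : e.1 = [i] := by simpa [canonRoot] using he
        have hmem' : (rc.1, rc.2) ∈ C.exList := List.mem_iff_getElem?.2 ⟨i, by simpa using hget⟩
        subst hr
        have hsub : subAt [i] C = some rc.2 := subAt_single hget
        have hv : (subAt ([i] : List ℕ) C).isSome := by rw [hsub]; rfl
        obtain ⟨hne, hnC'⟩ := norm_ex hn hmem'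
        have hsafe' : IntervalSafe [rc.2] [D'] :=
          safe_mono hsafe
            (fun t ht => ivalsOf_of_mem_conj (x := SPL.ex rc.1 rc.2) (mem_conj_ex.2 hmem') t
              (by simpa [SPL.ivalsOf] using ht))
            (by intro t ht; simpa [SPL.ivalsOf] using ht)
        have heq : e = ⟨[i], hv⟩ := Subtype.ext he'
        have hroot : canonRoot K O rc.2 ∈ SPL.sem (canonInterp K O rc.2) D' := by
          have := (sem_shift K O hsub D' [] hv (by rfl)).1 (heq ▸ hE)
          exact this
        exact STSO.exCase C rc.2 D' rc.1 (mem_conj_ex.2 hmem')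
          ((ih rc.2 hne hsafe' hnC').2 hroot)
  | inter D' D'' ih' ih'' =>
      intro C hC hsafe hn
      have hs' : IntervalSafe [C] [D'] :=
        safe_mono hsafe (fun t ht => ht) (by intro t ht; simp [SPL.ivalsOf, ht])
      have hs'' : IntervalSafe [C] [D''] :=
        safe_mono hsafe (fun t ht => ht) (by intro t ht; simp [SPL.ivalsOf, ht])
      constructor
      · intro h
        cases h with
        | botCase => exact absurd rfl hC
        | interCase _ _ _ h' h'' =>
            exact ⟨(ih' C hC hs' hn).1 h', (ih'' C hC hs'' hn).1 h''⟩
      · rintro ⟨h', h''⟩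
        exact STSO.interCase C D' D'' ((ih' C hC hs' hn).2 h') ((ih'' C hC hs'' hn).2 h'')

/-- if `C ⊑ D` is elementary w.r.t. `K` and `O`, `C ≠ ⊥`, and `(I, d)`
    is the canonical model of `C`, then `STS^{O_K⁺}(C ⊑ D) = true` iff `d ∈ D^I`. -/
theorem statement_12 (K : Set PLAx) (O : Set HAx) (C D : SPL)
    (hK : K.Finite) (hO : O.Finite)
    (hsig : (rNamesPL K ∪ rNamesL [C] ∪ rNamesL [D]) ∩ rNamesH O = ∅)
    (hCbot : C ≠ SPL.bot)
    (hsafe : IntervalSafe [C] [D])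
    (hnorm : NormalizedO K O C) :
    STSO K O C D ↔ canonRoot K O C ∈ SPL.sem (canonInterp K O C) D := by
  exact sts_iff_canon K O D C hCbot hsafe hnorm

end PLPaper
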